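/- Let A be the Hankel tensor of order 4 and dimension 3 with generating vector v = (v_0,…,v_8) given by v_0 = 1, v_1 = −1, v_2 = 1/2, and v_3 = v_4 = ⋯ = v_8 = 0. Then A is Vandermonde positive semi-definite (A u^4 = 1 − 4μ + 5μ² ≥ 0 for every Vandermonde vector u = (1, μ, μ²)), but A is not copositive; in particular, for x = (1, 1/2, 0) ∈ ℝ³_+ one has A x^4 = −1/4 < 0. -/

import Mathlib

open Finset

/-- `A x^m = ∑_{i_1,…,i_m} a_{i_1⋯i_m} x_{i_1}⋯x_{i_m}` for an order `m` dimension `n` tensor. -/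
noncomputable def tApply (m n : ℕ) (a : (Fin m → Fin n) → ℝ) (x : Fin n → ℝ) : ℝ :=
  ∑ i : Fin m → Fin n, a i * ∏ j, x (i j)

/-- An (even order) tensor is positive semi-definite if `A x^m ≥ 0` for all `x`. -/
def IsPSD (m n : ℕ) (a : (Fin m → Fin n) → ℝ) : Prop :=
  ∀ x : Fin n → ℝ, 0 ≤ tApply m n a x

/-- The Hankel tensor of order `m` and dimension `n` generated by `v`:
entries `a_{i_1⋯i_m} = v_{i_1+⋯+i_m-m}` (indices here are 0-based). -/
def hankelT (m n : ℕ) (v : ℕ → ℝ) : (Fin m → Fin n) → ℝ :=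
  fun i => v (∑ j, (i j : ℕ))

/-- `s(k,m,n)`: the number of index tuples `(i_1,…,i_m) ∈ [n]^m` with `i_1+⋯+i_m-m = k`. -/
def sCount (m n k : ℕ) : ℕ :=
  (Finset.univ.filter (fun i : Fin m → Fin n => ∑ j, (i j : ℕ) = k)).card

/-- A tensor is Vandermonde positive semi-definite if `A u^m ≥ 0` for every Vandermonde
vector `u = (1, μ, μ², …, μ^{n-1})`. -/
def IsVPSD (m n : ℕ) (a : (Fin m → Fin n) → ℝ) : Prop :=
  ∀ μ : ℝ, 0 ≤ tApply m n a (fun l => μ ^ (l : ℕ))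

/-- Example 4.2: the order 4, dimension 3 Hankel tensor generated by
`v = (1, -1, 1/2, 0, …, 0)` satisfies `A u^4 = 1 - 4μ + 5μ² ≥ 0` for every Vandermonde
vector `u = (1, μ, μ²)`, hence is Vandermonde positive semi-definite, but it is not
copositive; in particular `A x^4 = -1/4` for `x = (1, 1/2, 0)`. -/

lemma sum_pi_succ' {n : ℕ} {α : Type*} [Fintype α] [DecidableEq α] (f : (Fin (n+1) → α) → ℝ) :
    ∑ i, f i = ∑ a : α, ∑ g : Fin n → α, f (Fin.cons a g) := by
  rw [← (Fin.consEquiv fun _ : Fin (n+1) => α).sum_comp f, Fintype.sum_prod_type]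
  rfl

lemma sum_pi_zero' {α : Type*} [Fintype α] (f : (Fin 0 → α) → ℝ) :
    ∑ i, f i = f (fun i => i.elim0) := by
  rw [Fintype.sum_eq_single (fun i => i.elim0)]
  intro g h; exact absurd (funext fun i => i.elim0) h

theorem stmt_18 :
    (∀ μ : ℝ, tApply 4 3 (hankelT 4 3 (fun k => if k = 0 then 1 else if k = 1 then -1 else if k = 2 then 1/2 else 0)) (fun l => μ ^ (l : ℕ)) = 1 - 4 * μ + 5 * μ ^ 2) ∧
    IsVPSD 4 3 (hankelT 4 3 (fun k => if k = 0 then 1 else if k = 1 then -1 else if k = 2 then 1/2 else 0)) ∧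
    ¬ (∀ x : Fin 3 → ℝ, (∀ i, 0 ≤ x i) →
        0 ≤ tApply 4 3 (hankelT 4 3 (fun k => if k = 0 then 1 else if k = 1 then -1 else if k = 2 then 1/2 else 0)) x) ∧
    tApply 4 3 (hankelT 4 3 (fun k => if k = 0 then 1 else if k = 1 then -1 else if k = 2 then 1/2 else 0)) ![1, 1/2, 0] = -1/4 := by
  have h1 : ∀ μ : ℝ, tApply 4 3 (hankelT 4 3 (fun k => if k = 0 then 1 else if k = 1 then -1 else if k = 2 then 1/2 else 0)) (fun l => μ ^ (l : ℕ)) = 1 - 4 * μ + 5 * μ ^ 2 := by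
    intro μ
    simp only [tApply, hankelT, sum_pi_succ', sum_pi_zero', Fin.sum_univ_three,
      Fin.prod_univ_succ, Fin.prod_univ_zero, Fin.sum_univ_succ, Fin.sum_univ_zero,
      Fin.cons_succ, Fin.cons_zero]
    norm_num
    ring
  have h4 : tApply 4 3 (hankelT 4 3 (fun k => if k = 0 then 1 else if k = 1 then -1 else if k = 2 then 1/2 else 0)) ![1, 1/2, 0] = -1/4 := by
    simp only [tApply, hankelT, sum_pi_succ', sum_pi_zero', Fin.sum_univ_three,
      Fin.prod_univ_succ, Fin.prod_univ_zero, Fin.sum_univ_succ, Fin.sum_univ_zero,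
      Fin.cons_succ, Fin.cons_zero, Matrix.cons_val_zero, Matrix.cons_val_one,
      Matrix.head_cons, Matrix.cons_val_two, Matrix.tail_cons]
    norm_num
    simp [show (![1, 1/2, 0] : Fin 3 → ℝ) 2 = 0 from rfl]
    norm_num
  refine ⟨h1, ?_, ?_, h4⟩
  · intro μ
    rw [h1]
    nlinarith [sq_nonneg (5 * μ - 2)]
  · intro h
    have := h ![1, 1/2, 0] (by
      intro i
      fin_cases i <;> norm_num)
    rw [h4] at this
    norm_num at this
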